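/- Let $1 \le q, p \le \infty$ and $r > 0$. There exists a constant $C > 0$ (depending only on $d$, $q$, $p$) such that for every measurable function $f : \mathbb{R}^d \to \mathbb{C}$ one has $C^{-1}\, r^{d/p}\, {}_{r}\widetilde{\|f\|}_{q,p} \le {}_{r}\|f\|_{q,p} \le C\, r^{d/p}\, {}_{r}\widetilde{\|f\|}_{q,p}$. -/

import Mathlib

open MeasureTheory ENNReal Set Metric Filter

noncomputable section

/-- Shorthand for the Euclidean space `ℝ^d`. -/
abbrev Rd (d : ℕ) := EuclideanSpace ℝ (Fin d)

/-- The `L^p` "norm" (with values in `ℝ≥0∞`) of an `ℝ≥0∞`-valued function. -/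
def eLpNormE {α : Type*} [MeasurableSpace α] (g : α → ℝ≥0∞) (p : ℝ≥0∞) (μ : Measure α) :
    ℝ≥0∞ :=
  if p = ∞ then essSup g μ else (∫⁻ x, g x ^ p.toReal ∂μ) ^ (1 / p.toReal)

/-- The discrete `ℓ^p` norm of an `ℝ≥0∞`-valued family. -/
def lpNormE {ι : Type*} (a : ι → ℝ≥0∞) (p : ℝ≥0∞) : ℝ≥0∞ :=
  if p = ∞ then ⨆ k, a k else (∑' k, a k ^ p.toReal) ^ (1 / p.toReal)

/-- The continuous amalgam norm `‖f‖_{q,p,r}` of `f : ℝ^d → E`: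
the `L^p` norm (in `y`) of `y ↦ ‖f · χ_{B(y,r)}‖_{L^q}`. -/
def contAmalgam (d : ℕ) {E : Type*} [NormedAddCommGroup E] (f : Rd d → E)
    (q p : ℝ≥0∞) (r : ℝ) : ℝ≥0∞ :=
  eLpNormE (fun y => eLpNorm ((Metric.ball y r).indicator f) q volume) p volume

/-- The continuous amalgam norm of an `ℝ≥0∞`-valued function. -/
def contAmalgamE (d : ℕ) (g : Rd d → ℝ≥0∞) (q p : ℝ≥0∞) (r : ℝ) : ℝ≥0∞ :=
  eLpNormE (fun y => eLpNormE ((Metric.ball y r).indicator g) q volume) p volume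

/-- The half-open cube `Q_k^r = ∏_i [r kᵢ, r (kᵢ + 1))` indexed by `k ∈ ℤ^d`. -/
def unitCube (d : ℕ) (r : ℝ) (k : Fin d → ℤ) : Set (Rd d) :=
  {x | ∀ i, r * k i ≤ x i ∧ x i < r * (k i + 1)}

/-- The discrete amalgam norm: the `ℓ^p` norm over `k ∈ ℤ^d` of `‖f χ_{Q_k^r}‖_{L^q}`. -/
def discAmalgam (d : ℕ) {E : Type*} [NormedAddCommGroup E] (f : Rd d → E)
    (q p : ℝ≥0∞) (r : ℝ) : ℝ≥0∞ :=
  lpNormE (fun k : Fin d → ℤ => eLpNorm ((unitCube d r k).indicator f) q volume) p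

/-- The class `𝒢_{q,p}` of weight functions: `φ` is positive and measurable on `(0,∞)`,
`t ↦ t^{d/p} φ(t)` is almost decreasing and `t ↦ t^{d/q} φ(t)` is almost increasing
(with the convention `1/∞ = 0`). -/
structure IsGqp (d : ℕ) (q p : ℝ≥0∞) (φ : ℝ → ℝ) : Prop where
  measurable : Measurable φ
  pos : ∀ t : ℝ, 0 < t → 0 < φ t
  almost_decreasing : ∃ C : ℝ, 0 < C ∧ ∀ r s : ℝ, 0 < r → r ≤ s →
    s ^ ((d : ℝ) * (1 / p).toReal) * φ s ≤ C * (r ^ ((d : ℝ) * (1 / p).toReal) * φ r)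
  almost_increasing : ∃ C : ℝ, 0 < C ∧ ∀ r s : ℝ, 0 < r → r ≤ s →
    r ^ ((d : ℝ) * (1 / q).toReal) * φ r ≤ C * (s ^ ((d : ℝ) * (1 / q).toReal) * φ s)

/-- The generalized Fofana norm
`‖f‖_{(L^q,L^p)^φ} = sup_{r>0} φ(r)⁻¹ r^{d(-1/q - 1/p)} ‖f‖_{q,p,r}`. -/
def fofanaNorm (d : ℕ) {E : Type*} [NormedAddCommGroup E] (f : Rd d → E)
    (q p : ℝ≥0∞) (φ : ℝ → ℝ) : ℝ≥0∞ :=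
  ⨆ r : {r : ℝ // 0 < r},
    ENNReal.ofReal ((φ r)⁻¹ * (r : ℝ) ^ ((d : ℝ) * (-(1 / q).toReal - (1 / p).toReal))) *
      contAmalgam d f q p r

/-- The generalized Fofana norm of an `ℝ≥0∞`-valued function. -/
def fofanaNormE (d : ℕ) (g : Rd d → ℝ≥0∞) (q p : ℝ≥0∞) (φ : ℝ → ℝ) : ℝ≥0∞ :=
  ⨆ r : {r : ℝ // 0 < r},
    ENNReal.ofReal ((φ r)⁻¹ * (r : ℝ) ^ ((d : ℝ) * (-(1 / q).toReal - (1 / p).toReal))) *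
      contAmalgamE d g q p r

/-- The discrete variant of the generalized Fofana norm,
`sup_{r>0} φ(r)⁻¹ r^{-d/q} ‖f‖~_{q,p,r}`. -/
def fofanaNormDisc (d : ℕ) {E : Type*} [NormedAddCommGroup E] (f : Rd d → E)
    (q p : ℝ≥0∞) (φ : ℝ → ℝ) : ℝ≥0∞ :=
  ⨆ r : {r : ℝ // 0 < r},
    ENNReal.ofReal ((φ r)⁻¹ * (r : ℝ) ^ (-(d : ℝ) * (1 / q).toReal)) *
      discAmalgam d f q p r

/-- The Hardy–Littlewood maximal function (with values in `ℝ≥0∞`). -/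
def hlMax (d : ℕ) {E : Type*} [NormedAddCommGroup E] (f : Rd d → E) (x : Rd d) : ℝ≥0∞ :=
  ⨆ r : {r : ℝ // 0 < r},
    (volume (Metric.ball x (r : ℝ)))⁻¹ * ∫⁻ y in Metric.ball x (r : ℝ), (‖f y‖₊ : ℝ≥0∞)

section AuxNorms

variable {α : Type*} [MeasurableSpace α] {μ : Measure α} {p : ℝ≥0∞}

lemma one_le_toReal (hp : 1 ≤ p) (h : p ≠ ∞) : 1 ≤ p.toReal := by
  rw [← ENNReal.toReal_one]; exact ENNReal.toReal_mono h hp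

lemma toReal_pos' (hp : 1 ≤ p) (h : p ≠ ∞) : 0 < p.toReal := by
  have := one_le_toReal hp h; linarith

lemma eLpNormE_mono {f g : α → ℝ≥0∞} (h : ∀ x, f x ≤ g x) :
    eLpNormE f p μ ≤ eLpNormE g p μ := by
  unfold eLpNormE
  split_ifs
  · exact essSup_mono_ae (Filter.Eventually.of_forall h)
  · exact ENNReal.rpow_le_rpow
      (lintegral_mono fun x => ENNReal.rpow_le_rpow (h x) ENNReal.toReal_nonneg)
      (by positivity)

lemma eLpNormE_add_le {f g : α → ℝ≥0∞} (hf : AEMeasurable f μ) (hg : AEMeasurable g μ)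
    (hp : 1 ≤ p) :
    eLpNormE (fun x => f x + g x) p μ ≤ eLpNormE f p μ + eLpNormE g p μ := by
  unfold eLpNormE
  split_ifs with h
  · exact ENNReal.essSup_add_le f g
  · exact ENNReal.lintegral_Lp_add_le hf hg (one_le_toReal hp h)

lemma eLpNormE_zero (hp : 1 ≤ p) : eLpNormE (fun _ : α => (0 : ℝ≥0∞)) p μ = 0 := by
  unfold eLpNormE
  split_ifs with h
  · exact essSup_const_bot
  · have h1 : 0 < p.toReal := toReal_pos' hp h
    simp [ENNReal.zero_rpow_of_pos h1, ENNReal.zero_rpow_of_pos (by positivity : (0:ℝ) < 1 / p.toReal), h1]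

lemma eLpNormE_sum_le {ι : Type*} (t : Finset ι) (F : ι → α → ℝ≥0∞)
    (hF : ∀ i, Measurable (F i)) (hp : 1 ≤ p) :
    eLpNormE (fun x => ∑ i ∈ t, F i x) p μ ≤ ∑ i ∈ t, eLpNormE (F i) p μ := by
  classical
  induction t using Finset.induction with
  | empty => simp [eLpNormE_zero hp]
  | @insert a s ha ih =>
    simp only [Finset.sum_insert ha]
    calc eLpNormE (fun x => F a x + ∑ i ∈ s, F i x) p μ
        ≤ eLpNormE (F a) p μ + eLpNormE (fun x => ∑ i ∈ s, F i x) p μ := by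
          refine eLpNormE_add_le (hF a).aemeasurable ?_ hp
          · exact (Finset.measurable_sum s fun i _ => hF i).aemeasurable
      _ ≤ eLpNormE (F a) p μ + ∑ i ∈ s, eLpNormE (F i) p μ := add_le_add_right ih _

lemma lpNormE_mono {ι : Type*} {a b : ι → ℝ≥0∞} (h : ∀ k, a k ≤ b k) :
    lpNormE a p ≤ lpNormE b p := by
  unfold lpNormE
  split_ifs
  · exact iSup_mono h
  · exact ENNReal.rpow_le_rpow
      (ENNReal.tsum_le_tsum fun k => ENNReal.rpow_le_rpow (h k) ENNReal.toReal_nonneg)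
      (by positivity)

lemma lpNormE_comp_le {ι κ : Type*} (b : κ → ℝ≥0∞) (σ : ι → κ) (hσ : Function.Injective σ) :
    lpNormE (fun k => b (σ k)) p ≤ lpNormE b p := by
  unfold lpNormE
  split_ifs
  · exact iSup_le fun k => le_iSup b (σ k)
  · exact ENNReal.rpow_le_rpow
      (ENNReal.tsum_comp_le_tsum_of_injective hσ fun j => b j ^ p.toReal)
      (by positivity)

lemma lpNormE_eq_eLpNormE_count {ι : Type*} [MeasurableSpace ι] [MeasurableSingletonClass ι]
    [Countable ι] (a : ι → ℝ≥0∞) :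
    lpNormE a p = eLpNormE a p Measure.count := by
  unfold lpNormE eLpNormE
  split_ifs
  · have h2 : {k | ¬ a k ≤ essSup a (Measure.count (α := ι))} = ∅ := by
      have h := ae_le_essSup (μ := Measure.count (α := ι)) a
      rwa [ae_iff, Measure.count_eq_zero_iff] at h
    refine le_antisymm
      (iSup_le fun k => not_not.mp fun hn => Set.eq_empty_iff_forall_notMem.mp h2 k hn)
      (essSup_le_of_ae_le _ (Filter.Eventually.of_forall fun k => le_iSup a k))
  · rw [lintegral_count]

lemma lpNormE_sum_le {ι κ : Type*} [Countable κ] (t : Finset ι) (F : ι → κ → ℝ≥0∞)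
    (hp : 1 ≤ p) :
    lpNormE (fun k => ∑ i ∈ t, F i k) p ≤ ∑ i ∈ t, lpNormE (F i) p := by
  classical
  let _ : MeasurableSpace κ := ⊤
  have hsc : MeasurableSingletonClass κ := ⟨fun _ => trivial⟩
  rw [lpNormE_eq_eLpNormE_count]
  calc eLpNormE (fun k => ∑ i ∈ t, F i k) p Measure.count
      ≤ ∑ i ∈ t, eLpNormE (F i) p Measure.count :=
        eLpNormE_sum_le t F (fun i => measurable_of_countable _) hp
    _ = ∑ i ∈ t, lpNormE (F i) p := by
        refine Finset.sum_congr rfl fun i _ => (lpNormE_eq_eLpNormE_count _).symm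

end AuxNorms
section Cubes

variable {d : ℕ} {p : ℝ≥0∞}

/-- The index of the cube of size `r` containing `x`. -/
def cubeIdx (d : ℕ) (r : ℝ) (x : Rd d) : Fin d → ℤ := fun i => ⌊x i / r⌋

lemma mem_unitCube_iff {r : ℝ} (hr : 0 < r) {x : Rd d} {k : Fin d → ℤ} :
    x ∈ unitCube d r k ↔ ∀ i, ⌊x i / r⌋ = k i := by
  simp only [unitCube, Set.mem_setOf_eq]
  refine forall_congr' fun i => ?_
  rw [Int.floor_eq_iff, le_div_iff₀ hr, div_lt_iff₀ hr, mul_comm ((k i : ℝ)) r,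
    mul_comm ((k i : ℝ) + 1) r]

lemma mem_unitCube_cubeIdx {r : ℝ} (hr : 0 < r) (x : Rd d) :
    x ∈ unitCube d r (cubeIdx d r x) :=
  (mem_unitCube_iff hr).2 fun _ => rfl

lemma cubeIdx_eq_of_mem {r : ℝ} (hr : 0 < r) {x : Rd d} {k : Fin d → ℤ}
    (hx : x ∈ unitCube d r k) : cubeIdx d r x = k :=
  funext ((mem_unitCube_iff hr).1 hx)

lemma unitCube_eq_preimage (r : ℝ) (k : Fin d → ℤ) :
    unitCube d r k = (MeasurableEquiv.toLp 2 (Fin d → ℝ)).symm ⁻¹'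
      (Set.univ.pi fun i => Set.Ico (r * k i) (r * (k i + 1))) := by
  ext x
  simp [unitCube, Set.mem_pi]

lemma measurableSet_unitCube (r : ℝ) (k : Fin d → ℤ) :
    MeasurableSet (unitCube d r k) := by
  rw [unitCube_eq_preimage]
  exact (MeasurableEquiv.toLp 2 (Fin d → ℝ)).symm.measurable
    (MeasurableSet.univ_pi fun i => measurableSet_Ico)

lemma volume_unitCube {r : ℝ} (hr : 0 < r) (k : Fin d → ℤ) :
    volume (unitCube d r k) = ENNReal.ofReal r ^ d := by
  rw [unitCube_eq_preimage,
    (EuclideanSpace.volume_preserving_symm_measurableEquiv_toLp (Fin d)).measure_preimage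
      (MeasurableSet.univ_pi fun i => measurableSet_Ico).nullMeasurableSet,
    volume_pi_pi]
  have hlen : ∀ i : Fin d, volume (Set.Ico (r * k i) (r * (k i + 1))) = ENNReal.ofReal r := by
    intro i
    rw [Real.volume_Ico]
    congr 1
    ring
  simp [hlen, Finset.prod_const, Finset.card_univ]

lemma iUnion_unitCube {r : ℝ} (hr : 0 < r) :
    (⋃ k : Fin d → ℤ, unitCube d r k) = Set.univ := by
  refine Set.eq_univ_of_forall fun x => Set.mem_iUnion.2 ⟨cubeIdx d r x, mem_unitCube_cubeIdx hr x⟩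

lemma pairwise_disjoint_unitCube {r : ℝ} (hr : 0 < r) :
    Pairwise (Function.onFun Disjoint fun k : Fin d → ℤ => unitCube d r k) := by
  intro k k' hne
  rw [Function.onFun, Set.disjoint_left]
  intro x hx hx'
  exact hne ((cubeIdx_eq_of_mem hr hx).symm.trans (cubeIdx_eq_of_mem hr hx'))

lemma lintegral_eq_tsum_cubes {r : ℝ} (hr : 0 < r) (F : Rd d → ℝ≥0∞) :
    ∫⁻ x, F x = ∑' k : Fin d → ℤ, ∫⁻ x in unitCube d r k, F x := by
  rw [← setLIntegral_univ, ← iUnion_unitCube (d := d) hr,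
    lintegral_iUnion (fun k => measurableSet_unitCube r k) (pairwise_disjoint_unitCube hr)]

lemma measurable_comp_cubeIdx {r : ℝ} (c : (Fin d → ℤ) → ℝ≥0∞) :
    Measurable fun x : Rd d => c (cubeIdx d r x) := by
  have h1 : Measurable (cubeIdx d r) := by
    refine measurable_pi_lambda _ fun i => Measurable.floor ?_
    exact ((measurable_pi_apply i).comp
      (MeasurableEquiv.toLp 2 (Fin d → ℝ)).symm.measurable).div_const r
  exact (measurable_of_countable c).comp h1

lemma eLpNormE_comp_cubeIdx {r : ℝ} (hr : 0 < r) (hp : 1 ≤ p) (c : (Fin d → ℤ) → ℝ≥0∞) :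
    eLpNormE (fun y : Rd d => c (cubeIdx d r y)) p volume
      = ENNReal.ofReal (r ^ ((d : ℝ) * (1 / p).toReal)) * lpNormE c p := by
  unfold eLpNormE lpNormE
  split_ifs with h
  · subst h
    rw [show ((1 : ℝ≥0∞) / ⊤).toReal = 0 by simp, mul_zero, Real.rpow_zero, ENNReal.ofReal_one, one_mul]
    refine le_antisymm
      (essSup_le_of_ae_le _ (Filter.Eventually.of_forall fun y => le_iSup c (cubeIdx d r y)))
      (iSup_le fun k => ?_)
    have hae := ae_le_essSup (μ := (volume : Measure (Rd d))) (fun y => c (cubeIdx d r y))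
    rw [ae_iff] at hae
    have hQ : volume (unitCube d r k) ≠ 0 := by
      rw [volume_unitCube hr]
      exact pow_ne_zero _ (ENNReal.ofReal_pos.2 hr).ne'
    by_contra hk
    refine hQ (measure_mono_null (fun y hy => ?_) hae)
    show ¬ c (cubeIdx d r y) ≤ _
    rw [cubeIdx_eq_of_mem hr hy]
    exact hk
  · have hpt : 0 < p.toReal := toReal_pos' hp h
    have hV : ∀ k : Fin d → ℤ,
        ∫⁻ y in unitCube d r k, c (cubeIdx d r y) ^ p.toReal
          = c k ^ p.toReal * ENNReal.ofReal r ^ d := by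
      intro k
      rw [setLIntegral_congr_fun (measurableSet_unitCube r k)
          (fun y hy => by rw [cubeIdx_eq_of_mem hr hy]),
        setLIntegral_const, volume_unitCube hr]
    rw [lintegral_eq_tsum_cubes hr, tsum_congr hV, ENNReal.tsum_mul_right,
      ENNReal.mul_rpow_of_nonneg _ _ (by positivity : (0:ℝ) ≤ 1 / p.toReal)]
    rw [mul_comm]
    congr 1
    rw [← ENNReal.rpow_natCast (ENNReal.ofReal r) d, ← ENNReal.rpow_mul,
      ENNReal.ofReal_rpow_of_pos hr]
    congr 1
    simp [one_div, ENNReal.toReal_inv]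

end Cubes
section Geom

variable {d : ℕ}

lemma abs_coord_le_dist (x y : Rd d) (i : Fin d) : |x i - y i| ≤ dist x y := by
  rw [EuclideanSpace.dist_eq, ← Real.sqrt_sq_eq_abs]
  apply Real.sqrt_le_sqrt
  have h1 : (x i - y i) ^ 2 = dist (x i) (y i) ^ 2 := by
    rw [Real.dist_eq, sq_abs]
  rw [h1]
  exact Finset.single_le_sum (f := fun i => dist (x i) (y i) ^ 2)
    (fun j _ => sq_nonneg _) (Finset.mem_univ i)

lemma eLpNorm_indicator_le_sum {q : ℝ≥0∞} (hq : 1 ≤ q) {f : Rd d → ℂ} (hf : Measurable f)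
    {ι : Type*} (t : Finset ι) (T : ι → Set (Rd d)) (hT : ∀ i, MeasurableSet (T i))
    {S : Set (Rd d)} (hS : S ⊆ ⋃ i ∈ t, T i) :
    eLpNorm (S.indicator f) q volume ≤ ∑ i ∈ t, eLpNorm ((T i).indicator f) q volume := by
  have hpt : ∀ x, ‖S.indicator f x‖ ≤ ∑ i ∈ t, ‖(T i).indicator f x‖ := by
    intro x
    by_cases hx : x ∈ S
    · obtain ⟨i, hi, hxi⟩ : ∃ i ∈ t, x ∈ T i := by simpa using hS hx
      calc ‖S.indicator f x‖ = ‖f x‖ := by rw [Set.indicator_of_mem hx]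
        _ = ‖(T i).indicator f x‖ := by rw [Set.indicator_of_mem hxi]
        _ ≤ ∑ i ∈ t, ‖(T i).indicator f x‖ :=
          Finset.single_le_sum (f := fun j => ‖(T j).indicator f x‖)
            (fun j _ => norm_nonneg _) hi
    · rw [Set.indicator_of_notMem hx, norm_zero]
      exact Finset.sum_nonneg fun j _ => norm_nonneg _
  calc eLpNorm (S.indicator f) q volume
      ≤ eLpNorm (fun x => ∑ i ∈ t, ‖(T i).indicator f x‖) q volume :=
        eLpNorm_mono_real hpt
    _ = eLpNorm (∑ i ∈ t, fun x => ‖(T i).indicator f x‖) q volume := by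
        congr 1
        ext x
        simp
    _ ≤ ∑ i ∈ t, eLpNorm (fun x => ‖(T i).indicator f x‖) q volume :=
        eLpNorm_sum_le (fun i _ => ((hf.indicator (hT i)).norm).aestronglyMeasurable) hq
    _ = ∑ i ∈ t, eLpNorm ((T i).indicator f) q volume :=
        Finset.sum_congr rfl fun i _ => eLpNorm_norm _

/-- The set of offsets for the covering of a ball by cubes. -/
def nbhdSet (d : ℕ) : Finset (Fin d → ℤ) := Fintype.piFinset fun _ => ({-1, 0, 1} : Finset ℤ)

lemma ball_subset_iUnion {r : ℝ} (hr : 0 < r) (y : Rd d) :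
    Metric.ball y r ⊆
      ⋃ ε ∈ nbhdSet d, unitCube d r (fun i => cubeIdx d r y i + ε i) := by
  intro x hx
  rw [Set.mem_iUnion₂]
  have hy := mem_unitCube_cubeIdx hr y
  have hxc := mem_unitCube_cubeIdx hr x
  set k := cubeIdx d r y with hk
  set j := cubeIdx d r x with hj
  have key : ∀ i, j i ≤ k i + 1 ∧ k i - 1 ≤ j i := by
    intro i
    have hyi : r * (k i : ℝ) ≤ y i ∧ y i < r * ((k i : ℝ) + 1) := hy i
    have hxi : r * (j i : ℝ) ≤ x i ∧ x i < r * ((j i : ℝ) + 1) := hxc i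
    have hd : |x i - y i| < r := lt_of_le_of_lt (abs_coord_le_dist x y i) (Metric.mem_ball.1 hx)
    rw [abs_lt] at hd
    constructor
    · have e1 : r * (j i : ℝ) < r * ((k i : ℝ) + 2) := by nlinarith [hxi.1, hyi.2, hd.2]
      have e2 : (j i : ℝ) < (k i : ℝ) + 2 := (mul_lt_mul_iff_right₀ hr).1 e1
      have : j i < k i + 2 := by exact_mod_cast e2
      omega
    · have e1 : r * ((k i : ℝ) - 1) < r * ((j i : ℝ) + 1) := by nlinarith [hyi.1, hxi.2, hd.1]
      have e2 : (k i : ℝ) - 1 < (j i : ℝ) + 1 := (mul_lt_mul_iff_right₀ hr).1 e1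
      have : k i - 1 < j i + 1 := by exact_mod_cast e2
      omega
  refine ⟨fun i => j i - k i, ?_, ?_⟩
  · rw [nbhdSet, Fintype.mem_piFinset]
    intro i
    have := key i
    simp only [Finset.mem_insert, Finset.mem_singleton]
    omega
  · have : (fun i => k i + (j i - k i)) = j := by funext i; ring
    rw [this]
    exact hxc

lemma unitCube_subset_ball {s r : ℝ} (hs : 0 < s) (hr : 0 < r)
    (hlt : (d : ℝ) * s ^ 2 < r ^ 2) {j : Fin d → ℤ} {y : Rd d}
    (hy : y ∈ unitCube d s j) : unitCube d s j ⊆ Metric.ball y r := by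
  intro x hx
  rw [Metric.mem_ball, EuclideanSpace.dist_eq]
  have hb : ∀ i, dist (x i) (y i) ^ 2 ≤ s ^ 2 := by
    intro i
    have h1 : s * (j i : ℝ) ≤ x i ∧ x i < s * ((j i : ℝ) + 1) := hx i
    have h2 : s * (j i : ℝ) ≤ y i ∧ y i < s * ((j i : ℝ) + 1) := hy i
    rw [Real.dist_eq, sq_abs]
    nlinarith [h1.1, h1.2, h2.1, h2.2]
  have hsum : (∑ i, dist (x i) (y i) ^ 2) ≤ (d : ℝ) * s ^ 2 := by
    calc (∑ i, dist (x i) (y i) ^ 2) ≤ ∑ _i : Fin d, s ^ 2 :=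
          Finset.sum_le_sum fun i _ => hb i
      _ = (d : ℝ) * s ^ 2 := by simp [Finset.sum_const, Finset.card_univ, nsmul_eq_mul]
  calc √(∑ i, dist (x i) (y i) ^ 2) ≤ √((d : ℝ) * s ^ 2) := Real.sqrt_le_sqrt hsum
    _ < r := by
        rw [← Real.sqrt_sq hr.le]
        exact Real.sqrt_lt_sqrt (by positivity) hlt

lemma unitCube_subset_iUnion_sub {s : ℝ} (hs : 0 < s) (m : ℕ) (k : Fin d → ℤ) :
    unitCube d ((m : ℝ) * s) k ⊆
      ⋃ t ∈ Fintype.piFinset (fun _ : Fin d => Finset.range m),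
        unitCube d s (fun i => (m : ℤ) * k i + (t i : ℤ)) := by
  intro x hx
  rw [Set.mem_iUnion₂]
  have hxc := mem_unitCube_cubeIdx hs x
  set j := cubeIdx d s x with hj
  have key : ∀ i, (m : ℤ) * k i ≤ j i ∧ j i < (m : ℤ) * k i + m := by
    intro i
    have hxi : (m : ℝ) * s * (k i : ℝ) ≤ x i ∧ x i < (m : ℝ) * s * ((k i : ℝ) + 1) := hx i
    have hji : s * (j i : ℝ) ≤ x i ∧ x i < s * ((j i : ℝ) + 1) := hxc i
    constructor
    · have e1 : s * ((m : ℝ) * (k i : ℝ)) < s * ((j i : ℝ) + 1) := by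
        nlinarith [hxi.1, hji.2]
      have e2 : (m : ℝ) * (k i : ℝ) < (j i : ℝ) + 1 := (mul_lt_mul_iff_right₀ hs).1 e1
      have : (m : ℤ) * k i < j i + 1 := by exact_mod_cast e2
      omega
    · have e1 : s * (j i : ℝ) < s * ((m : ℝ) * (k i : ℝ) + m) := by
        nlinarith [hji.1, hxi.2]
      have e2 : (j i : ℝ) < (m : ℝ) * (k i : ℝ) + m := (mul_lt_mul_iff_right₀ hs).1 e1
      exact_mod_cast e2
  refine ⟨fun i => (j i - (m : ℤ) * k i).toNat, ?_, ?_⟩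
  · rw [Fintype.mem_piFinset]
    intro i
    rw [Finset.mem_range]
    have := key i
    omega
  · have : (fun i => (m : ℤ) * k i + (((j i - (m : ℤ) * k i).toNat : ℤ))) = j := by
      funext i
      have := key i
      omega
    rw [this]
    exact hxc

end Geom
/-- equivalence of the continuous and discrete amalgam norms,
`C⁻¹ r^{d/p} ‖f‖~_{q,p,r} ≤ ‖f‖_{q,p,r} ≤ C r^{d/p} ‖f‖~_{q,p,r}`. -/
theorem continuous_discrete_amalgam_equiv (d : ℕ) (q p : ℝ≥0∞) (hq : 1 ≤ q) (hp : 1 ≤ p) :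
    ∃ C : ℝ, 0 < C ∧ ∀ r : ℝ, 0 < r → ∀ f : Rd d → ℂ, Measurable f →
      ENNReal.ofReal (C⁻¹ * r ^ ((d : ℝ) * (1 / p).toReal)) * discAmalgam d f q p r ≤
          contAmalgam d f q p r ∧
        contAmalgam d f q p r ≤
          ENNReal.ofReal (C * r ^ ((d : ℝ) * (1 / p).toReal)) * discAmalgam d f q p r := by
  classical
  set mN : ℕ := ⌈Real.sqrt d⌉₊ + 1 with hmN
  have hm1 : 1 ≤ mN := Nat.le_add_left 1 _
  have hmR : 1 ≤ (mN : ℝ) := by exact_mod_cast hm1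
  have hmd : (d : ℝ) < (mN : ℝ) ^ 2 := by
    have h1 : Real.sqrt d ≤ (⌈Real.sqrt d⌉₊ : ℝ) := Nat.le_ceil _
    have h2 : ((⌈Real.sqrt d⌉₊ : ℝ)) + 1 = (mN : ℝ) := by rw [hmN]; push_cast; ring
    nlinarith [Real.sq_sqrt (show (0:ℝ) ≤ d by positivity), Real.sqrt_nonneg (d : ℝ)]
  set C : ℕ := (3 * mN ^ 2) ^ d with hC
  have hmpos : 0 < mN := hm1
  have hCpos : 0 < C := pow_pos (Nat.mul_pos (by norm_num) (pow_pos hmpos 2)) d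
  have hC0 : 0 < (C : ℝ) := by exact_mod_cast hCpos
  have hCne : ((C : ℕ) : ℝ≥0∞) ≠ 0 := by exact_mod_cast hCpos.ne'
  have hCtop : ((C : ℕ) : ℝ≥0∞) ≠ ⊤ := ENNReal.natCast_ne_top C
  -- constant comparisons in ℕ
  have hupperC : (3 : ℕ) ^ d ≤ C := Nat.pow_le_pow_left (by nlinarith) d
  have hlowerC : mN ^ d * mN ^ d ≤ C := by
    rw [← mul_pow]
    exact Nat.pow_le_pow_left (by nlinarith) d
  refine ⟨(C : ℝ), hC0, fun r hr f hf => ?_⟩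
  have hα0 : 0 ≤ (d : ℝ) * (1 / p).toReal := by positivity
  have hαd : (d : ℝ) * (1 / p).toReal ≤ (d : ℝ) := by
    have h1 : (1 / p).toReal ≤ 1 := by
      rcases eq_or_ne p ∞ with hp' | hp'
      · simp [hp']
      · rw [one_div, ENNReal.toReal_inv]
        exact inv_le_one_of_one_le₀ (one_le_toReal hp hp')
    nlinarith [show (0:ℝ) ≤ (d : ℝ) by positivity]
  set α : ℝ := (d : ℝ) * (1 / p).toReal with hα
  set R : ℝ≥0∞ := ENNReal.ofReal (r ^ α) with hR
  set a : (Fin d → ℤ) → ℝ≥0∞ :=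
    fun k => eLpNorm ((unitCube d r k).indicator f) q volume with ha
  have hdisc : discAmalgam d f q p r = lpNormE a p := rfl
  set g : Rd d → ℝ≥0∞ :=
    fun y => eLpNorm ((Metric.ball y r).indicator f) q volume with hg
  have hmRpos : (0 : ℝ) < (mN : ℝ) := by positivity
  set s : ℝ := r / mN with hsdef
  have hs : 0 < s := div_pos hr hmRpos
  have hrs : (mN : ℝ) * s = r := by
    rw [hsdef]
    field_simp
  set b : (Fin d → ℤ) → ℝ≥0∞ :=
    fun k => eLpNorm ((unitCube d s k).indicator f) q volume with hb
  -- UPPER BOUND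
  have upper : contAmalgam d f q p r ≤ ((3:ℝ≥0∞))^d * (R * lpNormE a p) := by
    have step1 : ∀ y, g y ≤ ∑ ε ∈ nbhdSet d, a (fun i => cubeIdx d r y i + ε i) := by
      intro y
      exact eLpNorm_indicator_le_sum hq hf (nbhdSet d) _
        (fun ε => measurableSet_unitCube _ _) (ball_subset_iUnion hr y)
    calc contAmalgam d f q p r
        ≤ eLpNormE (fun y => ∑ ε ∈ nbhdSet d, a (fun i => cubeIdx d r y i + ε i)) p volume :=
          eLpNormE_mono step1
      _ ≤ ∑ ε ∈ nbhdSet d, eLpNormE (fun y => a (fun i => cubeIdx d r y i + ε i)) p volume := by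
          apply eLpNormE_sum_le
          · exact fun ε => measurable_comp_cubeIdx (fun k : Fin d → ℤ => a (fun i => k i + ε i))
          · exact hp
      _ = ∑ ε ∈ nbhdSet d, R * lpNormE (fun k : Fin d → ℤ => a (fun i => k i + ε i)) p := by
          refine Finset.sum_congr rfl fun ε _ => ?_
          exact eLpNormE_comp_cubeIdx hr hp (fun k : Fin d → ℤ => a (fun i => k i + ε i))
      _ ≤ ∑ _ε ∈ nbhdSet d, R * lpNormE a p := by
          refine Finset.sum_le_sum fun ε _ => ?_
          refine mul_le_mul_right (lpNormE_comp_le a (fun (k : Fin d → ℤ) i => k i + ε i) ?_) R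
          intro k1 k2 hkk
          funext i
          have h := congrFun hkk i
          simpa using h
      _ = ((nbhdSet d).card : ℝ≥0∞) * (R * lpNormE a p) := by
          rw [Finset.sum_const, nsmul_eq_mul]
      _ = (3:ℝ≥0∞)^d * (R * lpNormE a p) := by
          have hcard : (nbhdSet d).card = 3 ^ d := by
            rw [nbhdSet, Fintype.card_piFinset]
            simp
          rw [hcard]
          push_cast
          ring
  -- LOWER BOUND
  have hlt : (d : ℝ) * s ^ 2 < r ^ 2 := by
    have hr2 : r ^ 2 = (mN : ℝ) ^ 2 * s ^ 2 := by rw [← hrs]; ring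
    nlinarith [mul_pos (sub_pos.2 hmd) (pow_pos hs 2)]
  have lower : R * lpNormE a p ≤ ((mN:ℝ≥0∞)^d * (mN:ℝ≥0∞)^d) * contAmalgam d f q p r := by
    have stepL1 : ∀ y, b (cubeIdx d s y) ≤ g y := by
      intro y
      refine eLpNorm_mono fun x => ?_
      have hsub : unitCube d s (cubeIdx d s y) ⊆ Metric.ball y r :=
        unitCube_subset_ball hs hr hlt (mem_unitCube_cubeIdx hs y)
      by_cases hx : x ∈ unitCube d s (cubeIdx d s y)
      · rw [Set.indicator_of_mem hx, Set.indicator_of_mem (hsub hx)]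
      · rw [Set.indicator_of_notMem hx]
        simp
    have hcont1 : ENNReal.ofReal (s ^ α) * lpNormE b p ≤ contAmalgam d f q p r := by
      rw [← eLpNormE_comp_cubeIdx hs hp b]
      exact eLpNormE_mono stepL1
    have stepL4 : ∀ k, a k ≤ ∑ t ∈ Fintype.piFinset (fun _ : Fin d => Finset.range mN),
        b (fun i => (mN : ℤ) * k i + (t i : ℤ)) := by
      intro k
      refine eLpNorm_indicator_le_sum hq hf _ _ (fun t => measurableSet_unitCube _ _) ?_
      have h := unitCube_subset_iUnion_sub (d := d) hs mN k
      rwa [hrs] at h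
    have stepL5 : lpNormE a p ≤ ((mN : ℝ≥0∞))^d * lpNormE b p := by
      calc lpNormE a p
          ≤ lpNormE (fun k : Fin d → ℤ => ∑ t ∈ Fintype.piFinset (fun _ : Fin d => Finset.range mN),
              b (fun i => (mN : ℤ) * k i + (t i : ℤ))) p := lpNormE_mono stepL4
        _ ≤ ∑ t ∈ Fintype.piFinset (fun _ : Fin d => Finset.range mN),
              lpNormE (fun k : Fin d → ℤ => b (fun i => (mN : ℤ) * k i + (t i : ℤ))) p :=
          by apply lpNormE_sum_le; exact hp
        _ ≤ ∑ _t ∈ Fintype.piFinset (fun _ : Fin d => Finset.range mN), lpNormE b p := by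
            refine Finset.sum_le_sum fun t _ => ?_
            refine lpNormE_comp_le b _ ?_
            intro k1 k2 hkk
            funext i
            have h := congrFun hkk i
            exact mul_left_cancel₀ (Int.natCast_ne_zero.2 hmpos.ne')
              (add_right_cancel (a := (mN : ℤ) * k1 i) (b := (t i : ℤ)) h)
        _ = ((mN : ℝ≥0∞))^d * lpNormE b p := by
            rw [Finset.sum_const, nsmul_eq_mul, Fintype.card_piFinset]
            simp
    have hRsplit : R = ENNReal.ofReal ((mN : ℝ) ^ α) * ENNReal.ofReal (s ^ α) := by
      rw [hR, ← ENNReal.ofReal_mul (by positivity), ← Real.mul_rpow (by positivity) hs.le, hrs]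
    have hmα : ENNReal.ofReal ((mN : ℝ) ^ α) ≤ (mN : ℝ≥0∞)^d := by
      calc ENNReal.ofReal ((mN : ℝ) ^ α) ≤ ENNReal.ofReal ((mN : ℝ) ^ (d : ℝ)) :=
            ENNReal.ofReal_le_ofReal (Real.rpow_le_rpow_of_exponent_le hmR hαd)
        _ = (mN : ℝ≥0∞)^d := by
            rw [Real.rpow_natCast, ENNReal.ofReal_pow (by positivity)]
            rw [ENNReal.ofReal_natCast]
    calc R * lpNormE a p
        ≤ R * (((mN : ℝ≥0∞))^d * lpNormE b p) := mul_le_mul_right stepL5 R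
      _ = (mN : ℝ≥0∞)^d * (ENNReal.ofReal ((mN : ℝ) ^ α)
            * (ENNReal.ofReal (s ^ α) * lpNormE b p)) := by rw [hRsplit]; ring
      _ ≤ (mN : ℝ≥0∞)^d * ((mN : ℝ≥0∞)^d * (ENNReal.ofReal (s ^ α) * lpNormE b p)) :=
            mul_le_mul_right (mul_le_mul_left hmα _) _
      _ ≤ ((mN : ℝ≥0∞)^d * (mN : ℝ≥0∞)^d) * contAmalgam d f q p r := by
            rw [mul_assoc]
            exact mul_le_mul_right (mul_le_mul_right hcont1 _) _
  constructor
  · -- lower inequality of the statement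
    have hkey : R * discAmalgam d f q p r ≤ ((C : ℕ) : ℝ≥0∞) * contAmalgam d f q p r := by
      rw [hdisc]
      refine le_trans lower (mul_le_mul_left ?_ _)
      calc (mN : ℝ≥0∞)^d * (mN : ℝ≥0∞)^d = ((mN ^ d * mN ^ d : ℕ) : ℝ≥0∞) := by push_cast; ring
        _ ≤ ((C : ℕ) : ℝ≥0∞) := by exact_mod_cast hlowerC
    rw [ENNReal.ofReal_mul (by positivity), ENNReal.ofReal_inv_of_pos hC0,
      ENNReal.ofReal_natCast, ← hR, mul_assoc]
    refine le_trans (mul_le_mul_right hkey _) ?_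
    rw [← mul_assoc, ENNReal.inv_mul_cancel hCne hCtop, one_mul]
  · rw [ENNReal.ofReal_mul hC0.le, ENNReal.ofReal_natCast, ← hR, hdisc]
    refine le_trans upper ?_
    rw [mul_assoc]
    refine mul_le_mul_left ?_ _
    calc (3:ℝ≥0∞)^d = (((3:ℕ) ^ d : ℕ) : ℝ≥0∞) := by push_cast; ring
      _ ≤ ((C : ℕ) : ℝ≥0∞) := by exact_mod_cast hupperC
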